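/- Let M be a maximum matching of a finite bipartite graph G = (V, F, E), and let T_I and T_O be the incomplete and overcomplete sets of the coarse decomposition of G with respect to M. Then T_I and T_O are disjoint. -/

import Mathlib

variable {F V : Type*} [Fintype F] [Fintype V] [DecidableEq F] [DecidableEq V]

/-- `M` is a matching of the bipartite graph with edge set `E`:
`M ⊆ E` and no two edges of `M` share an endpoint. -/
def IsMatching (E M : Finset (F × V)) : Prop :=
  M ⊆ E ∧ (∀ e ∈ M, ∀ e' ∈ M, e.1 = e'.1 → e = e') ∧
    ∀ e ∈ M, ∀ e' ∈ M, e.2 = e'.2 → e = e'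

/-- `M` is a maximum matching: a matching of greatest cardinality. -/
def IsMaxMatching (E M : Finset (F × V)) : Prop :=
  IsMatching E M ∧ ∀ M' : Finset (F × V), IsMatching E M' → M'.card ≤ M.card

/-- The (symmetric) adjacency relation of the bipartite graph on `F ⊕ V`. -/
def sumAdj (E : Finset (F × V)) : (F ⊕ V) → (F ⊕ V) → Prop
  | Sum.inl f, Sum.inr v => (f, v) ∈ E
  | Sum.inr v, Sum.inl f => (f, v) ∈ E
  | _, _ => False

/-- The pair of consecutive path vertices forms an edge belonging to `M`. -/
def pairInM (M : Finset (F × V)) : (F ⊕ V) × (F ⊕ V) → Prop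
  | (Sum.inl f, Sum.inr v) => (f, v) ∈ M
  | (Sum.inr v, Sum.inl f) => (f, v) ∈ M
  | _ => False

/-- `l` is an `M`-alternating path in the bipartite graph with edge set `E`:
a nonempty sequence of distinct vertices in which consecutive vertices are joined
by edges of `E` lying alternately inside and outside `M`. -/
def IsAltPath (E M : Finset (F × V)) (l : List (F ⊕ V)) : Prop :=
  l ≠ [] ∧ l.Nodup ∧ l.Chain' (sumAdj E) ∧
    (l.zip l.tail).Chain' fun e e' => pairInM M e ↔ ¬ pairInM M e'

/-- `v ∈ V` is not an endpoint of any edge of `M`. -/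
def VUnmatched (M : Finset (F × V)) (v : V) : Prop := ∀ f, (f, v) ∉ M

/-- `f ∈ F` is not an endpoint of any edge of `M`. -/
def FUnmatched (M : Finset (F × V)) (f : F) : Prop := ∀ v, (f, v) ∉ M

/-- The incomplete set `T_I`: all vertices reachable from some `M`-unmatched
vertex of `V` by a (possibly trivial) `M`-alternating path. -/
def incompleteSet (E M : Finset (F × V)) : Set (F ⊕ V) :=
  {x | ∃ v : V, VUnmatched M v ∧ ∃ l : List (F ⊕ V),
    IsAltPath E M l ∧ l.head? = some (Sum.inr v) ∧ l.getLast? = some x}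

/-- The overcomplete set `T_O`: all vertices reachable from some `M`-unmatched
vertex of `F` by a (possibly trivial) `M`-alternating path. -/
def overcompleteSet (E M : Finset (F × V)) : Set (F ⊕ V) :=
  {x | ∃ f : F, FUnmatched M f ∧ ∃ l : List (F ⊕ V),
    IsAltPath E M l ∧ l.head? = some (Sum.inl f) ∧ l.getLast? = some x}

/-- The complete set `T_C = (V ∪ F) \ (T_I ∪ T_O)`. -/
def completeSet (E M : Finset (F × V)) : Set (F ⊕ V) :=
  Set.univ \ (incompleteSet E M ∪ overcompleteSet E M)

lemma pairInM_swap (M : Finset (F × V)) (p : (F ⊕ V) × (F ⊕ V)) :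
    pairInM M p.swap ↔ pairInM M p := by
  obtain ⟨a, b⟩ := p
  cases a <;> cases b <;> simp [pairInM, Prod.swap]

lemma sumAdj_symm (E : Finset (F × V)) {a b : F ⊕ V} (h : sumAdj E a b) : sumAdj E b a := by
  cases a <;> cases b <;> simp [sumAdj] at h ⊢ <;> exact h

lemma zip_tail_take {X : Type*} : ∀ (l : List X) (n : ℕ),
    ((l.take (n+1)).zip (l.take (n+1)).tail) = (l.zip l.tail).take n := by
  intro l
  induction l with
  | nil => simp
  | cons a t ih =>
    intro n
    cases n with
    | zero => cases t <;> simp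
    | succ m =>
      cases t with
      | nil => simp
      | cons b t' =>
        have h := ih m
        simp only [List.take, List.tail, List.zip_cons_cons, List.zip, List.zipWith] at *
        rw [h]

lemma edges_concat {X : Type*} : ∀ (A : List X) (x a : X), A.getLast? = some x →
    ((A ++ [a]).zip (A ++ [a]).tail) = A.zip A.tail ++ [(x, a)] := by
  intro A
  induction A with
  | nil => simp
  | cons c A' ih =>
    intro x a h
    cases A' with
    | nil => simp_all
    | cons d A'' =>
      have h' : (d :: A'').getLast? = some x := by
        rwa [List.getLast?_cons_cons] at h
      have := ih x a h'
      simp only [List.cons_append, List.zip_cons_cons, List.tail] at *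
      rw [this]

lemma edges_append {X : Type*} : ∀ (A : List X) (a : X) (B : List X),
    ((A ++ a :: B).zip (A ++ a :: B).tail)
      = ((A ++ [a]).zip (A ++ [a]).tail) ++ ((a :: B).zip B) := by
  intro A
  induction A with
  | nil => simp
  | cons c A' ih =>
    intro a B
    cases A' with
    | nil => simp
    | cons d A'' =>
      have := ih a B
      simp only [List.cons_append, List.zip_cons_cons, List.tail] at *
      rw [this]

lemma zip_tail_reverse {X : Type*} : ∀ (l : List X),
    (l.reverse.zip l.reverse.tail) = ((l.zip l.tail).reverse).map Prod.swap := by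
  intro l
  induction l with
  | nil => simp
  | cons a t ih =>
    cases t with
    | nil => simp
    | cons b t' =>
      have heq : (a :: b :: t').reverse = (b :: t').reverse ++ [a] := by simp
      have hlast : ((b :: t').reverse).getLast? = some b := by
        rw [List.getLast?_reverse]; rfl
      rw [heq, edges_concat _ b a hlast, ih]
      simp [List.zip_cons_cons]

lemma snd_of_last_edge {X : Type*} : ∀ (l : List X) (e : X × X),
    (l.zip l.tail).getLast? = some e → l.getLast? = some e.2 := by
  intro l
  induction l with
  | nil => simp
  | cons a t ih =>
    intro e h
    cases t with
    | nil => simp at h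
    | cons b t' =>
      cases t' with
      | nil =>
        simp [List.zip_cons_cons] at h
        subst h; rfl
      | cons c t'' =>
        simp only [List.zip_cons_cons, List.tail] at h
        rw [List.getLast?_cons_cons] at h ⊢
        exact ih e h

lemma chain_all {X : Type*} {S : X → X → Prop} {R : X × X → X × X → Prop} {φ : X × X → Prop}
    (prop : ∀ a b c, φ (a, b) → S b c → R (a, b) (b, c) → φ (b, c)) :
    ∀ (t : List X) (a b : X), φ (a, b) → List.Chain' S (a :: b :: t) →
      List.Chain' R ((a :: b :: t).zip (b :: t)) →
      ∀ p ∈ (a :: b :: t).zip (b :: t), φ p := by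
  intro t
  induction t with
  | nil =>
    intro a b hab _ _ p hp
    simp only [List.zip_cons_cons, List.zip_nil_right, List.mem_singleton] at hp
    subst hp; exact hab
  | cons c t' ih =>
    intro a b hab hS hR p hp
    have hSbc : S b c := (List.isChain_cons_cons.mp (List.isChain_cons.mp hS).2).1
    have hS' : List.Chain' S (b :: c :: t') := (List.isChain_cons_cons.mp hS).2
    have hRrel : R (a, b) (b, c) := by
      simp only [List.zip_cons_cons] at hR
      exact (List.isChain_cons_cons.mp hR).1
    have hR' : List.Chain' R ((b :: c :: t').zip (c :: t')) := by
      simp only [List.zip_cons_cons] at hR ⊢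
      exact (List.isChain_cons_cons.mp hR).2
    have hbc : φ (b, c) := prop a b c hab hSbc hRrel
    simp only [List.zip_cons_cons, List.mem_cons] at hp
    rcases hp with h | hp
    · subst h; exact hab
    · exact ih b c hbc hS' hR' p (by simpa [List.zip_cons_cons] using hp)

/-- Parity marking: along an alternating path, an edge is in `M` iff its second
endpoint satisfies `ψ`, where `ψ` flips across adjacencies. -/

lemma marks {E M : Finset (F × V)} {l : List (F ⊕ V)} (ψ : (F ⊕ V) → Prop)
    (hψ : ∀ a b, sumAdj E a b → (ψ b ↔ ¬ ψ a))
    (hl : IsAltPath E M l)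
    (hfirst : ∀ p ∈ (l.zip l.tail).head?, (pairInM M p ↔ ψ p.2)) :
    ∀ p ∈ l.zip l.tail, (pairInM M p ↔ ψ p.2) := by
  obtain ⟨hne, hnd, hadj, halt⟩ := hl
  match l with
  | [] => simp
  | [a] => simp
  | a :: b :: t =>
    have hab : pairInM M (a, b) ↔ ψ b := by
      have := hfirst (a, b) (by simp [List.zip_cons_cons])
      simpa using this
    refine chain_all (φ := fun p => pairInM M p ↔ ψ p.2) ?_ t a b hab hadj
      (by simpa using halt)
    intro x y z hxy hSyz hRyz
    have h1 : ψ z ↔ ¬ ψ y := hψ y z hSyz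
    have h2 : pairInM M (y, z) ↔ ¬ pairInM M (x, y) := by tauto
    simp only at hxy ⊢
    tauto

lemma marks_I {E M : Finset (F × V)} {l : List (F ⊕ V)} {v : V}
    (hl : IsAltPath E M l) (hh : l.head? = some (Sum.inr v)) (hv : VUnmatched M v) :
    ∀ p ∈ l.zip l.tail, (pairInM M p ↔ ∃ w, p.2 = Sum.inr w) := by
  refine marks (fun x => ∃ w, x = Sum.inr w) ?_ hl ?_
  · intro a b hab
    cases a <;> cases b <;> simp [sumAdj] at hab ⊢
  · intro p hp
    cases l with
    | nil => simp at hh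
    | cons a t =>
      simp only [List.head?_cons, Option.some.injEq] at hh
      subst hh
      cases t with
      | nil => exact absurd hp (by simp)
      | cons b t' =>
        simp only [List.tail_cons, List.zip_cons_cons, List.head?_cons, Option.mem_some_iff] at hp
        subst hp
        have hadj : sumAdj E (Sum.inr v) b := (List.isChain_cons_cons.mp hl.2.2.1).1
        cases b with
        | inl f => simp [pairInM, hv f]
        | inr w => exact absurd hadj (by simp [sumAdj])

lemma marks_O {E M : Finset (F × V)} {l : List (F ⊕ V)} {f : F}
    (hl : IsAltPath E M l) (hh : l.head? = some (Sum.inl f)) (hf : FUnmatched M f) :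
    ∀ p ∈ l.zip l.tail, (pairInM M p ↔ ∃ w, p.2 = Sum.inl w) := by
  refine marks (fun x => ∃ w, x = Sum.inl w) ?_ hl ?_
  · intro a b hab
    cases a <;> cases b <;> simp [sumAdj] at hab ⊢
  · intro p hp
    cases l with
    | nil => simp at hh
    | cons a t =>
      simp only [List.head?_cons, Option.some.injEq] at hh
      subst hh
      cases t with
      | nil => exact absurd hp (by simp)
      | cons b t' =>
        simp only [List.tail_cons, List.zip_cons_cons, List.head?_cons, Option.mem_some_iff] at hp
        subst hp
        have hadj : sumAdj E (Sum.inl f) b := (List.isChain_cons_cons.mp hl.2.2.1).1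
        cases b with
        | inr w => simp [pairInM, hf w]
        | inl g => exact absurd hadj (by simp [sumAdj])

lemma chain_alt_congr {M M' : Finset (F × V)} :
    ∀ {L : List ((F ⊕ V) × (F ⊕ V))},
    (∀ p ∈ L, (pairInM M p ↔ pairInM M' p)) →
    List.Chain' (fun e e' => pairInM M e ↔ ¬ pairInM M e') L →
    List.Chain' (fun e e' => pairInM M' e ↔ ¬ pairInM M' e') L := by
  intro L
  induction L with
  | nil => intro _ _; exact List.isChain_nil
  | cons a L ih =>
    intro h hc
    cases L with
    | nil => exact List.isChain_singleton a
    | cons b L' =>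
      simp only [List.Chain'] at hc ⊢
      rw [List.isChain_cons_cons] at hc ⊢
      refine ⟨?_, ih (fun p hp => h p (List.mem_cons_of_mem a hp)) hc.2⟩
      have ha := h a (by simp)
      have hb := h b (by simp)
      tauto

lemma augment (E : Finset (F × V)) :
    ∀ (n : ℕ) (M : Finset (F × V)) (l : List (F ⊕ V)), l.length ≤ n →
      IsMatching E M → IsAltPath E M l →
      ∀ v f, l.head? = some (Sum.inr v) → l.getLast? = some (Sum.inl f) →
      VUnmatched M v → FUnmatched M f →
      ∃ M', IsMatching E M' ∧ M'.card = M.card + 1 := by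
  intro n
  induction n with
  | zero =>
    intro M l hlen _ hl _ _ _ _ _ _
    exact absurd (List.length_eq_zero_iff.mp (Nat.le_zero.mp hlen)) hl.1
  | succ n ih =>
    intro M l hlen hM hl v f hh hlast hv hf
    cases l with
    | nil => simp at hh
    | cons a t =>
      simp only [List.head?_cons, Option.some.injEq] at hh
      subst hh
      cases t with
      | nil => simp at hlast
      | cons b t' =>
        have hadj1 : sumAdj E (Sum.inr v) b := (List.isChain_cons_cons.mp hl.2.2.1).1
        cases b with
        | inr w => exact absurd hadj1 (by simp [sumAdj])
        | inl f1 =>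
        have hf1vE : (f1, v) ∈ E := hadj1
        cases t' with
        | nil =>
          -- l = [inr v, inl f1], so f1 = f
          have hff : f1 = f := by simpa using hlast
          subst hff
          refine ⟨insert (f1, v) M, ⟨?_, ?_, ?_⟩, ?_⟩
          · intro e he
            rcases Finset.mem_insert.mp he with rfl | he
            · exact hf1vE
            · exact hM.1 he
          · rintro ⟨a, b⟩ ha ⟨c, d⟩ hc h
            dsimp at h
            subst h
            rcases Finset.mem_insert.mp ha with h1 | h1 <;>
              rcases Finset.mem_insert.mp hc with h2 | h2
            · rw [h1, h2]
            · injection h1 with e1 e2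
              subst e1
              exact absurd h2 (hf d)
            · injection h2 with e1 e2
              subst e1
              exact absurd h1 (hf b)
            · exact hM.2.1 _ h1 _ h2 rfl
          · rintro ⟨a, b⟩ ha ⟨c, d⟩ hc h
            dsimp at h
            subst h
            rcases Finset.mem_insert.mp ha with h1 | h1 <;>
              rcases Finset.mem_insert.mp hc with h2 | h2
            · rw [h1, h2]
            · injection h1 with e1 e2
              subst e2
              exact absurd h2 (hv c)
            · injection h2 with e1 e2
              subst e2
              exact absurd h1 (hv a)
            · exact hM.2.2 _ h1 _ h2 rfl
          · exact Finset.card_insert_of_notMem (hv f1)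
        | cons c t'' =>
          have hadj2 : sumAdj E (Sum.inl f1) c :=
            (List.isChain_cons_cons.mp (List.isChain_cons_cons.mp hl.2.2.1).2).1
          cases c with
          | inl g => exact absurd hadj2 (by simp [sumAdj])
          | inr v1 =>
          have halt := hl.2.2.2
          simp only [List.tail_cons, List.zip_cons_cons] at halt
          have hrel : pairInM M (Sum.inr v, Sum.inl f1) ↔ ¬ pairInM M (Sum.inl f1, Sum.inr v1) :=
            (List.isChain_cons_cons.mp halt).1
          have hm1 : (f1, v1) ∈ M := by
            have h1 : ¬ pairInM M (Sum.inr v, Sum.inl f1) := by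
              simpa [pairInM] using hv f1
            by_contra hmem
            exact h1 (hrel.mpr (by simpa [pairInM] using hmem))
          have hnd := hl.2.1
          have hvnotin : Sum.inr v ∉ (Sum.inl f1 :: Sum.inr v1 :: t'' : List (F ⊕ V)) :=
            (List.nodup_cons.mp hnd).1
          have hf1notin : Sum.inl f1 ∉ (Sum.inr v1 :: t'' : List (F ⊕ V)) :=
            (List.nodup_cons.mp (List.nodup_cons.mp hnd).2).1
          have hvv1 : v ≠ v1 := by
            intro h; subst h; exact hvnotin (by simp)
          set l' : List (F ⊕ V) := Sum.inr v1 :: t'' with hl'def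
          have hlast' : l'.getLast? = some (Sum.inl f) := by
            rw [List.getLast?_cons_cons, List.getLast?_cons_cons] at hlast
            exact hlast
          have hfmem : Sum.inl f ∈ l' := by
            have hne : l' ≠ [] := by simp [hl'def]
            have h2 := List.getLast?_eq_getLast hne
            rw [h2, Option.some.injEq] at hlast'
            rw [← hlast']
            exact List.getLast_mem hne
          have hlast'' : l'.getLast? = some (Sum.inl f) := by
            rw [List.getLast?_cons_cons, List.getLast?_cons_cons] at hlast
            exact hlast
          have hff1 : f ≠ f1 := by
            intro h; subst h; exact hf1notin hfmem
          set M0 : Finset (F × V) := insert (f1, v) (M.erase (f1, v1)) with hM0def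
          have hfv_nm : (f1, v) ∉ M.erase (f1, v1) := fun h => hv f1 (Finset.mem_of_mem_erase h)
          have hM0card : M0.card = M.card := by
            have hpos : 0 < M.card := Finset.card_pos.mpr ⟨_, hm1⟩
            rw [hM0def, Finset.card_insert_of_notMem hfv_nm, Finset.card_erase_of_mem hm1]
            omega
          have hmemM0 : ∀ g w, (g, w) ∈ M0 ↔
              ((g, w) = (f1, v) ∨ ((g, w) ∈ M ∧ (g, w) ≠ (f1, v1))) := by
            intro g w
            rw [hM0def, Finset.mem_insert, Finset.mem_erase]
            tauto
          have hM0 : IsMatching E M0 := by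
            refine ⟨?_, ?_, ?_⟩
            · intro e he
              rcases Finset.mem_insert.mp he with rfl | he
              · exact hf1vE
              · exact hM.1 (Finset.mem_of_mem_erase he)
            · rintro ⟨a, b⟩ ha ⟨c, d⟩ hc h
              dsimp at h
              subst h
              rcases Finset.mem_insert.mp ha with h1 | h1 <;>
                rcases Finset.mem_insert.mp hc with h2 | h2
              · rw [h1, h2]
              · injection h1 with e1 e2
                have heq2 : (a, d) = (f1, v1) :=
                  hM.2.1 _ (Finset.mem_of_mem_erase h2) _ hm1 e1
                rw [heq2] at h2
                exact absurd rfl (Finset.mem_erase.mp h2).1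
              · injection h2 with e1 e2
                have heq2 : (a, b) = (f1, v1) :=
                  hM.2.1 _ (Finset.mem_of_mem_erase h1) _ hm1 e1
                rw [heq2] at h1
                exact absurd rfl (Finset.mem_erase.mp h1).1
              · exact hM.2.1 _ (Finset.mem_of_mem_erase h1) _ (Finset.mem_of_mem_erase h2) rfl
            · rintro ⟨a, b⟩ ha ⟨c, d⟩ hc h
              dsimp at h
              subst h
              rcases Finset.mem_insert.mp ha with h1 | h1 <;>
                rcases Finset.mem_insert.mp hc with h2 | h2
              · rw [h1, h2]
              · injection h1 with e1 e2
                subst e2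
                exact absurd (Finset.mem_of_mem_erase h2) (hv c)
              · injection h2 with e1 e2
                subst e2
                exact absurd (Finset.mem_of_mem_erase h1) (hv a)
              · exact hM.2.2 _ (Finset.mem_of_mem_erase h1) _ (Finset.mem_of_mem_erase h2) rfl
          have hv1un : VUnmatched M0 v1 := by
            intro g hg
            rcases (hmemM0 g v1).mp hg with h | ⟨hgM, hne⟩
            · injection h with e1 e2
              exact hvv1 e2.symm
            · exact hne (hM.2.2 _ hgM _ hm1 rfl)
          have hfun : FUnmatched M0 f := by
            intro w hw
            rcases (hmemM0 f w).mp hw with h | ⟨hgM, _⟩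
            · injection h with e1 e2
              exact hff1 e1
            · exact hf w hgM
          have hl'nodup : l'.Nodup := (List.nodup_cons.mp (List.nodup_cons.mp hnd).2).2
          have hl'chain : l'.Chain' (sumAdj E) :=
            (List.isChain_cons_cons.mp (List.isChain_cons_cons.mp hl.2.2.1).2).2
          have hcongr : ∀ p ∈ l'.zip l'.tail, (pairInM M p ↔ pairInM M0 p) := by
            intro p hp
            obtain ⟨x, y⟩ := p
            have hx : x ∈ l' := (List.of_mem_zip hp).1
            have hy : y ∈ l' := List.mem_of_mem_tail (List.of_mem_zip hp).2
            cases x <;> cases y <;> simp only [pairInM]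
            case inl.inr g w =>
              have hg : g ≠ f1 := fun h => hf1notin (h ▸ hx)
              rw [hmemM0 g w]
              constructor
              · intro hm
                refine Or.inr ⟨hm, fun hc => hg ?_⟩
                injection hc with e1 e2
              · rintro (hc | ⟨hm, _⟩)
                · exfalso
                  apply hg
                  injection hc with e1 e2
                · exact hm
            case inr.inl w g =>
              have hg : g ≠ f1 := fun h => hf1notin (h ▸ hy)
              rw [hmemM0 g w]
              constructor
              · intro hm
                refine Or.inr ⟨hm, fun hc => hg ?_⟩
                injection hc with e1 e2
              · rintro (hc | ⟨hm, _⟩)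
                · exfalso
                  apply hg
                  injection hc with e1 e2
                · exact hm
          have hl'alt : (l'.zip l'.tail).Chain' fun e e' => pairInM M0 e ↔ ¬ pairInM M0 e' := by
            refine chain_alt_congr hcongr ?_
            exact halt.tail.tail
          have hl'path : IsAltPath E M0 l' := ⟨by simp [hl'def], hl'nodup, hl'chain, hl'alt⟩
          have hlen' : l'.length ≤ n := by
            simp only [hl'def, List.length_cons] at hlen ⊢
            omega
          obtain ⟨M', hM', hcard⟩ := ih M0 l' hlen' hM0 hl'path v1 f rfl hlast'' hv1un hfun
          exact ⟨M', hM', by rw [hcard, hM0card]⟩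

lemma altPath_take {E M : Finset (F × V)} {l : List (F ⊕ V)} (h : IsAltPath E M l) (n : ℕ) :
    IsAltPath E M (l.take (n + 1)) := by
  obtain ⟨hne, hnd, hadj, halt⟩ := h
  refine ⟨?_, (List.take_sublist _ _).nodup hnd, hadj.prefix (List.take_prefix _ _), ?_⟩
  · cases l with
    | nil => exact absurd rfl hne
    | cons a t => simp
  · rw [zip_tail_take]
    exact halt.prefix (List.take_prefix _ _)

lemma altPath_reverse {E M : Finset (F × V)} {l : List (F ⊕ V)} (h : IsAltPath E M l) :
    IsAltPath E M l.reverse := by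
  obtain ⟨hne, hnd, hadj, halt⟩ := h
  refine ⟨by simpa using hne, List.nodup_reverse.mpr hnd, ?_, ?_⟩
  · simp only [List.Chain']
    rw [List.isChain_reverse]
    exact hadj.imp (fun a b hab => sumAdj_symm E hab)
  · simp only [List.Chain']
    rw [zip_tail_reverse, List.isChain_map, List.isChain_reverse]
    refine halt.imp ?_
    intro e e' hee
    rw [pairInM_swap, pairInM_swap]
    tauto

lemma head?_append_cons {X : Type*} (s t : List X) (a : X) :
    (s ++ a :: t).head? = (s ++ [a]).head? := by
  cases s <;> simp

lemma splice {E M : Finset (F × V)} {P Q : List (F ⊕ V)} {y : F ⊕ V} {v : V} {f : F}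
    (hP : IsAltPath E M P) (hQ : IsAltPath E M Q)
    (hPh : P.head? = some (Sum.inr v)) (hQh : Q.head? = some (Sum.inl f))
    (hPl : P.getLast? = some y) (hQl : Q.getLast? = some y)
    (hv : VUnmatched M v) (hf : FUnmatched M f)
    (key : ∀ z ∈ P, z ∈ Q → z = y)
    (hP2 : 2 ≤ P.length) (hQ2 : 2 ≤ Q.length) :
    ∃ R : List (F ⊕ V), IsAltPath E M R ∧
      R.head? = some (Sum.inr v) ∧ R.getLast? = some (Sum.inl f) := by
  have hQr := altPath_reverse hQ
  have hQrh : Q.reverse.head? = some y := by rw [List.head?_reverse]; exact hQl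
  have hQrl : Q.reverse.getLast? = some (Sum.inl f) := by rw [List.getLast?_reverse]; exact hQh
  obtain ⟨qr, hQreq⟩ : ∃ qr, Q.reverse = y :: qr := by
    cases hc : Q.reverse with
    | nil => rw [hc] at hQrh; simp at hQrh
    | cons a l =>
      rw [hc, List.head?_cons, Option.some.injEq] at hQrh
      exact ⟨l, by rw [hQrh]⟩
  have hqrne : qr ≠ [] := by
    intro h
    have hlen := congrArg List.length hQreq
    rw [h] at hlen
    simp at hlen
    omega
  obtain ⟨P0, hPc⟩ : ∃ P0, P = P0 ++ [y] := by
    rcases List.eq_nil_or_concat P with h | ⟨L, b, h⟩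
    · exact absurd h hP.1
    · rw [List.concat_eq_append] at h
      rw [h, List.getLast?_concat, Option.some.injEq] at hPl
      exact ⟨L, by rw [h, hPl]⟩
  have hQrnd := hQr.2.1
  rw [hQreq] at hQrnd
  refine ⟨P ++ qr, ⟨?_, ?_, ?_, ?_⟩, ?_, ?_⟩
  · intro h
    exact hP.1 (List.append_eq_nil_iff.mp h).1
  · rw [List.nodup_append]
    refine ⟨hP.2.1, (List.nodup_cons.mp hQrnd).2, ?_⟩
    intro a haP b haqr hab
    subst hab
    have haQ : a ∈ Q := by
      rw [← List.mem_reverse, hQreq]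
      exact List.mem_cons_of_mem y haqr
    have hay : a = y := key a haP haQ
    subst hay
    exact (List.nodup_cons.mp hQrnd).1 haqr
  · simp only [List.Chain']
    rw [List.isChain_append]
    have hch := hQr.2.2.1
    rw [hQreq] at hch
    refine ⟨hP.2.2.1, hch.tail, ?_⟩
    intro a ha b hb
    have hay : a = y := by
      rw [Option.mem_def, hPl, Option.some.injEq] at ha
      exact ha.symm
    subst hay
    exact (List.isChain_cons.mp hch).1 b hb
  · have hedges : (P ++ qr).zip (P ++ qr).tail
        = (P.zip P.tail) ++ ((y :: qr).zip qr) := by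
      conv_lhs => rw [hPc, List.append_assoc, List.singleton_append]
      rw [edges_append P0 y qr, ← hPc]
    simp only [List.Chain']
    rw [hedges, List.isChain_append]
    have haltQr := hQr.2.2.2
    rw [hQreq] at haltQr
    refine ⟨hP.2.2.2, haltQr, ?_⟩
    intro e he e' he'
    rw [Option.mem_def] at he he'
    have hesnd : P.getLast? = some e.2 := snd_of_last_edge _ _ he
    have hey : e.2 = y := by rw [hPl, Option.some.injEq] at hesnd; exact hesnd.symm
    have heMem : e ∈ P.zip P.tail := List.mem_of_getLast? he
    have hmarkP := marks_I hP hPh hv e heMem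
    have hrev : (y :: qr).zip qr = ((Q.zip Q.tail).reverse).map Prod.swap := by
      have h2 := zip_tail_reverse Q
      rw [hQreq] at h2
      simpa using h2
    rw [hrev, List.head?_map, List.head?_reverse] at he'
    obtain ⟨e'', he''last, he''eq⟩ := Option.map_eq_some_iff.mp he'
    have he''mem : e'' ∈ Q.zip Q.tail := List.mem_of_getLast? he''last
    have he''snd : e''.2 = y := by
      have := snd_of_last_edge _ _ he''last
      rw [hQl, Option.some.injEq] at this
      exact this.symm
    have hmarkQ := marks_O hQ hQh hf e'' he''mem
    have hswap : pairInM M e' ↔ pairInM M e'' := by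
      rw [← he''eq]; exact pairInM_swap M e''
    rw [hswap, hmarkP, hmarkQ, hey, he''snd]
    cases y <;> simp
  · have h2 : (P ++ qr).head? = P.head? := by
      cases P with
      | nil => exact absurd rfl hP.1
      | cons a l => simp
    rw [h2, hPh]
  · rw [List.getLast?_append]
    have hq : qr.getLast? = some (Sum.inl f) := by
      cases qr with
      | nil => exact absurd rfl hqrne
      | cons b l =>
        rw [hQreq, List.getLast?_cons_cons] at hQrl
        exact hQrl
    rw [hq]
    rfl

lemma no_aug {E M : Finset (F × V)} (hM : IsMaxMatching E M) (R : List (F ⊕ V)) (v : V) (f : F)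
    (hR : IsAltPath E M R) (hh : R.head? = some (Sum.inr v)) (hl : R.getLast? = some (Sum.inl f))
    (hv : VUnmatched M v) (hf : FUnmatched M f) : False := by
  obtain ⟨M', hM', hc⟩ := augment E R.length M R le_rfl hM.1 hR v f hh hl hv hf
  have := hM.2 M' hM'
  omega

/-- the incomplete and overcomplete sets of the coarse decomposition
with respect to a maximum matching are disjoint. -/
theorem incomplete_overcomplete_disjoint (E M : Finset (F × V))
    (hM : IsMaxMatching E M) :
    incompleteSet E M ∩ overcompleteSet E M = ∅ := by
  classical
  rw [Set.eq_empty_iff_forall_notMem]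
  rintro x ⟨⟨v0, hv0, P0, hP0, hP0h, hP0l⟩, ⟨f0, hf0, Q0, hQ0, hQ0h, hQ0l⟩⟩
  have hex : ∃ n, ∃ P Q : List (F ⊕ V), ∃ y : F ⊕ V, ∃ v : V, ∃ f : F,
      VUnmatched M v ∧ FUnmatched M f ∧ IsAltPath E M P ∧ IsAltPath E M Q ∧
      P.head? = some (Sum.inr v) ∧ Q.head? = some (Sum.inl f) ∧
      P.getLast? = some y ∧ Q.getLast? = some y ∧ P.length + Q.length = n :=
    ⟨_, P0, Q0, x, v0, f0, hv0, hf0, hP0, hQ0, hP0h, hQ0h, hP0l, hQ0l, rfl⟩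
  obtain ⟨P, Q, y, v, f, hv, hf, hP, hQ, hPh, hQh, hPl, hQl, hsum⟩ := Nat.find_spec hex
  have key : ∀ z ∈ P, z ∈ Q → z = y := by
    intro z hzP hzQ
    by_contra hzy
    obtain ⟨s, t, hPe⟩ := List.append_of_mem hzP
    obtain ⟨s', t', hQe⟩ := List.append_of_mem hzQ
    have htne : t ≠ [] := by
      rintro rfl
      rw [hPe] at hPl
      rw [show s ++ [z] = s ++ [z] from rfl, List.getLast?_concat, Option.some.injEq] at hPl
      exact hzy hPl
    have ht'ne : t' ≠ [] := by
      rintro rfl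
      rw [hQe] at hQl
      rw [List.getLast?_concat, Option.some.injEq] at hQl
      exact hzy hQl
    have hP'eq : P.take (s.length + 1) = s ++ [z] := by
      rw [hPe, List.take_append]
      simp
    have hQ'eq : Q.take (s'.length + 1) = s' ++ [z] := by
      rw [hQe, List.take_append]
      simp
    have hP' : IsAltPath E M (P.take (s.length + 1)) := altPath_take hP s.length
    have hQ' : IsAltPath E M (Q.take (s'.length + 1)) := altPath_take hQ s'.length
    have hP'h : (P.take (s.length + 1)).head? = some (Sum.inr v) := by
      rw [hP'eq, ← head?_append_cons s t z, ← hPe]; exact hPh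
    have hQ'h : (Q.take (s'.length + 1)).head? = some (Sum.inl f) := by
      rw [hQ'eq, ← head?_append_cons s' t' z, ← hQe]; exact hQh
    have hP'l : (P.take (s.length + 1)).getLast? = some z := by
      rw [hP'eq]; exact List.getLast?_concat
    have hQ'l : (Q.take (s'.length + 1)).getLast? = some z := by
      rw [hQ'eq]; exact List.getLast?_concat
    have hlt : (P.take (s.length + 1)).length + (Q.take (s'.length + 1)).length
        < Nat.find hex := by
      have h1 : (P.take (s.length + 1)).length = s.length + 1 := by
        rw [hP'eq]; simp
      have h2 : (Q.take (s'.length + 1)).length = s'.length + 1 := by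
        rw [hQ'eq]; simp
      have h3 : P.length = s.length + 1 + t.length := by rw [hPe]; simp; omega
      have h4 : Q.length = s'.length + 1 + t'.length := by rw [hQe]; simp; omega
      have h5 : 0 < t.length := List.length_pos_iff.mpr htne
      have h6 : 0 < t'.length := List.length_pos_iff.mpr ht'ne
      omega
    exact Nat.find_min hex hlt
      ⟨_, _, z, v, f, hv, hf, hP', hQ', hP'h, hQ'h, hP'l, hQ'l, rfl⟩
  have hPne := hP.1
  have hQne := hQ.1
  by_cases hP1 : P.length = 1
  · -- P = [y] with y = inr v
    have hy : y = Sum.inr v := by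
      cases P with
      | nil => exact absurd rfl hPne
      | cons a l =>
        cases l with
        | nil =>
          simp only [List.head?_cons, Option.some.injEq] at hPh
          simp only [List.getLast?_singleton, Option.some.injEq] at hPl
          rw [← hPl, hPh]
        | cons b l' => simp at hP1
    exact no_aug hM Q.reverse v f (altPath_reverse hQ)
      (by rw [List.head?_reverse, hQl, hy]) (by rw [List.getLast?_reverse]; exact hQh) hv hf
  by_cases hQ1 : Q.length = 1
  · have hy : y = Sum.inl f := by
      cases Q with
      | nil => exact absurd rfl hQne
      | cons a l =>
        cases l with
        | nil =>
          simp only [List.head?_cons, Option.some.injEq] at hQh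
          simp only [List.getLast?_singleton, Option.some.injEq] at hQl
          rw [← hQl, hQh]
        | cons b l' => simp at hQ1
    exact no_aug hM P v f hP hPh (by rw [hPl, hy]) hv hf
  · have hP2 : 2 ≤ P.length := by
      have := List.length_pos_iff.mpr hPne
      omega
    have hQ2 : 2 ≤ Q.length := by
      have := List.length_pos_iff.mpr hQne
      omega
    obtain ⟨R, hR, hRh, hRl⟩ := splice hP hQ hPh hQh hPl hQl hv hf key hP2 hQ2
    exact no_aug hM R v f hR hRh hRl hv hf
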